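/- For all x, y ∈ ℝ, the functions b and s satisfy the identity s_{xx}(x,y)·s(x,y) − s_x(x,y)² = −s(−x,−y)·b(x,y). -/

import Mathlib

/-- First partial derivative (with respect to the first variable) of a function of two
real variables. -/
noncomputable def pd1 (f : ℝ → ℝ → ℝ) (x y : ℝ) : ℝ := deriv (fun t => f t y) x

/-- Second partial derivative (with respect to the second variable) of a function of two
real variables. -/
noncomputable def pd2 (f : ℝ → ℝ → ℝ) (x y : ℝ) : ℝ := deriv (fun t => f x t) y

/-- The blow-up series `b(t₂,t₃)` of the U(3) blow-up formula for manifolds of simple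
type. -/
noncomputable def bFun (x y : ℝ) : ℝ :=
  (1 / 3) * Real.exp (-x ^ 2 / 2 + y ^ 2) *
    (Real.cosh (Real.sqrt 3 * x) + 2 * Real.cos (Real.sqrt 3 * y))

/-- The blow-up series `s(t₂,t₃)` of the U(3) blow-up formula for manifolds of simple
type. -/
noncomputable def sFun (x y : ℝ) : ℝ :=
  (1 / 3) * Real.exp (-x ^ 2 / 2 + y ^ 2) *
    (Real.cosh (Real.sqrt 3 * x) - Real.cos (Real.sqrt 3 * y) +
      Real.sqrt 3 * Real.sin (Real.sqrt 3 * y))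

lemma hexp (y x : ℝ) : HasDerivAt (fun t : ℝ => Real.exp (-t ^ 2 / 2 + y ^ 2))
    (Real.exp (-x ^ 2 / 2 + y ^ 2) * (-x)) x := by
  have h1 : HasDerivAt (fun t : ℝ => -t ^ 2 / 2 + y ^ 2) (-x) x := by
    have := (((hasDerivAt_pow 2 x).neg).div_const 2).add_const (y ^ 2)
    refine this.congr_deriv ?_
    norm_num
    ring
  exact h1.exp

lemma hch (x : ℝ) : HasDerivAt (fun t : ℝ => Real.cosh (Real.sqrt 3 * t))
    (Real.sinh (Real.sqrt 3 * x) * Real.sqrt 3) x :=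
  by simpa using ((hasDerivAt_id x).const_mul (Real.sqrt 3)).cosh

lemma hsh (x : ℝ) : HasDerivAt (fun t : ℝ => Real.sinh (Real.sqrt 3 * t))
    (Real.cosh (Real.sqrt 3 * x) * Real.sqrt 3) x :=
  by simpa using ((hasDerivAt_id x).const_mul (Real.sqrt 3)).sinh

lemma pd1s (x y : ℝ) : pd1 sFun x y =
    (1 / 3) * Real.exp (-x ^ 2 / 2 + y ^ 2) *
      ((-x) * (Real.cosh (Real.sqrt 3 * x) - Real.cos (Real.sqrt 3 * y) +
        Real.sqrt 3 * Real.sin (Real.sqrt 3 * y)) +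
       Real.sinh (Real.sqrt 3 * x) * Real.sqrt 3) := by
  have h := (((hexp y x).mul ((hch x).sub_const (Real.cos (Real.sqrt 3 * y)) |>.add_const
      (Real.sqrt 3 * Real.sin (Real.sqrt 3 * y)))).const_mul (1 / 3))
  have h2 : HasDerivAt (fun t => sFun t y)
      (1 / 3 *
        (Real.exp (-x ^ 2 / 2 + y ^ 2) * -x * (Real.cosh (Real.sqrt 3 * x) - Real.cos (Real.sqrt 3 * y) + Real.sqrt 3 * Real.sin (Real.sqrt 3 * y)) +
          Real.exp (-x ^ 2 / 2 + y ^ 2) * (Real.sinh (Real.sqrt 3 * x) * Real.sqrt 3))) x := by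
    simpa [sFun, mul_assoc] using h
  rw [pd1, h2.deriv]
  ring

lemma pd1pd1s (x y : ℝ) : pd1 (pd1 sFun) x y =
    (1 / 3) * Real.exp (-x ^ 2 / 2 + y ^ 2) *
      ((x ^ 2 - 1) * (Real.cosh (Real.sqrt 3 * x) - Real.cos (Real.sqrt 3 * y) +
        Real.sqrt 3 * Real.sin (Real.sqrt 3 * y)) -
       2 * x * Real.sinh (Real.sqrt 3 * x) * Real.sqrt 3 +
       Real.cosh (Real.sqrt 3 * x) * Real.sqrt 3 * Real.sqrt 3) := by
  have hinner : HasDerivAt (fun t : ℝ =>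
      (-t) * (Real.cosh (Real.sqrt 3 * t) - Real.cos (Real.sqrt 3 * y) +
        Real.sqrt 3 * Real.sin (Real.sqrt 3 * y)) + Real.sinh (Real.sqrt 3 * t) * Real.sqrt 3)
      ((-1) * (Real.cosh (Real.sqrt 3 * x) - Real.cos (Real.sqrt 3 * y) +
        Real.sqrt 3 * Real.sin (Real.sqrt 3 * y)) +
       (-x) * (Real.sinh (Real.sqrt 3 * x) * Real.sqrt 3) +
       Real.cosh (Real.sqrt 3 * x) * Real.sqrt 3 * Real.sqrt 3) x := by
    have := ((hasDerivAt_id x).neg.mul ((hch x).sub_const (Real.cos (Real.sqrt 3 * y)) |>.add_const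
        (Real.sqrt 3 * Real.sin (Real.sqrt 3 * y)))).add ((hsh x).mul_const (Real.sqrt 3))
    exact this
  have h := ((hexp y x).mul hinner).const_mul (1 / 3)
  have key : (fun t => pd1 sFun t y) = fun t =>
      1 / 3 * (Real.exp (-t ^ 2 / 2 + y ^ 2) *
        ((-t) * (Real.cosh (Real.sqrt 3 * t) - Real.cos (Real.sqrt 3 * y) +
          Real.sqrt 3 * Real.sin (Real.sqrt 3 * y)) +
         Real.sinh (Real.sqrt 3 * t) * Real.sqrt 3)) :=
    funext fun t => by rw [pd1s]; ring
  rw [pd1, key]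
  refine h.deriv.trans ?_
  ring

/-- The second blow-up differential equation (with point classes
specialized to `a₂ = 3`, `a₃ = 0`):
`s_{xx}·s − (s_x)² = −(s∘τ)·b`, where `τ(x,y) = (−x,−y)`. -/
theorem stmt3 (x y : ℝ) :
    pd1 (pd1 sFun) x y * sFun x y - (pd1 sFun x y) ^ 2 = -(sFun (-x) (-y) * bFun x y) := by
  rw [pd1pd1s, pd1s]
  simp only [sFun, bFun, mul_neg, neg_neg, Real.cosh_neg, Real.cos_neg, Real.sin_neg, neg_sq]
  have hu : Real.sqrt 3 * Real.sqrt 3 = 3 := Real.mul_self_sqrt (by norm_num)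
  have hc : Real.cosh (Real.sqrt 3 * x) ^ 2 - Real.sinh (Real.sqrt 3 * x) ^ 2 = 1 :=
    Real.cosh_sq_sub_sinh_sq _
  have hd : Real.sin (Real.sqrt 3 * y) ^ 2 + Real.cos (Real.sqrt 3 * y) ^ 2 = 1 :=
    Real.sin_sq_add_cos_sq _
  set E := Real.exp (-x ^ 2 / 2 + y ^ 2)
  set ch := Real.cosh (Real.sqrt 3 * x)
  set sh := Real.sinh (Real.sqrt 3 * x)
  set c := Real.cos (Real.sqrt 3 * y)
  set d := Real.sin (Real.sqrt 3 * y)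
  set u := Real.sqrt 3
  linear_combination (E ^ 2 / 9) * (-3) * hd + (E ^ 2 / 9) * 3 * hc +
    (E ^ 2 / 9) * (1 - d ^ 2 - c * ch + u * d * ch + ch ^ 2 - sh ^ 2 - 1) * hu
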